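/- arXiv:1210.8231 — 3 statements merged into one kernel-verified Lean document; each statement's English description precedes it below -/
import Mathlib

section
/- A positive integer n is a congruent number (i.e., the area of a right triangle with rational side lengths) if and only if there exists a rational point (x, y) with y ≠ 0 on the elliptic curve n·y² = x³ − x. -/
/-- A positive integer `n` is a *congruent number* if it is the area of a right triangle
with rational side lengths. -/
def IsCongruentNumber (n : ℕ) : Prop :=
  ∃ a b c : ℚ, 0 < a ∧ 0 < b ∧ 0 < c ∧ a ^ 2 + b ^ 2 = c ^ 2 ∧ a * b / 2 = n

/-- `n > 0` is congruent iff there is a rational point `(x, y)` with `y ≠ 0`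
on the elliptic curve `n·y² = x³ − x`. -/
theorem congruent_iff_rational_point (n : ℕ) (hn : 0 < n) :
    IsCongruentNumber n ↔ ∃ x y : ℚ, y ≠ 0 ∧ (n : ℚ) * y ^ 2 = x ^ 3 - x := by
  constructor
  · rintro ⟨a, b, c, ha, hb, hc, hpy, har⟩
    have hb0 : b ≠ 0 := ne_of_gt hb
    have hac : a + c > 0 := by linarith
    refine ⟨(a + c) / b, 2 * (a + c) / b ^ 2, ?_, ?_⟩
    · exact div_ne_zero (by positivity) (by positivity)
    · have hab : a * b = 2 * n := by linarith
      field_simp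
      linear_combination (-(2*(a+c))) * hab + b * hpy
  · rintro ⟨x, y, hy, h⟩
    have hny : (0:ℚ) < n * y ^ 2 := by positivity
    have hx3 : (0:ℚ) < x ^ 3 - x := h ▸ hny
    have hx : x ≠ 0 := by
      intro hx0; rw [hx0] at hx3; norm_num at hx3
    have hx2 : x ^ 2 - 1 ≠ 0 := by
      intro h1
      have : x ^ 3 - x = x * (x ^ 2 - 1) := by ring
      rw [this, h1, mul_zero] at hx3; norm_num at hx3
    refine ⟨|(x ^ 2 - 1) / y|, |2 * x / y|, (x ^ 2 + 1) / |y|, ?_, ?_, ?_, ?_, ?_⟩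
    · exact abs_pos.mpr (div_ne_zero hx2 hy)
    · exact abs_pos.mpr (div_ne_zero (by simpa using hx) hy)
    · positivity
    · rw [sq_abs, sq_abs, div_pow, div_pow, div_pow, sq_abs]
      field_simp
      ring
    · have key : (x ^ 2 - 1) / y * (2 * x / y) = 2 * n := by
        field_simp
        linear_combination (-1) * h
      rw [← abs_mul, key, abs_of_pos (by positivity : (0:ℚ) < 2 * n)]
      ring
end

section
/- The torsion subgroup of E(ℚ(√m))⁻ is exactly E[2], the 2-torsion subgroup of E, for any square-free integer m with m ≠ 0, 1. -/
open WeierstrassCurve WeierstrassCurve.Affine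

/-- The elliptic curve `E : y² = x³ − x` over `ℚ`. -/
def E : WeierstrassCurve.Affine ℚ := ⟨0, 0, 0, -1, 0⟩

open Classical in
/-- The subgroup `E(K)⁻` of points of `E` over `K` sent to their negatives by `σ`. -/
noncomputable def minusSubgroup (K : Type) [Field K] [Algebra ℚ K] (σ : K ≃ₐ[ℚ] K) :
    AddSubgroup (E⁄K).Point :=
  (Affine.Point.map (W' := E) σ.toAlgHom + AddMonoidHom.id (E⁄K).Point).ker

open Classical



private lemma v2_two : padicValRat 2 2 = 1 := padicValRat.self one_lt_two

private lemma v2_four : padicValRat 2 4 = 2 := by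
  have h4 : (4:ℚ) = 2 * 2 := by norm_num
  rw [h4, padicValRat.mul (by norm_num) (by norm_num), v2_two]; norm_num

private lemma v2_sq (a : ℚ) (ha : a ≠ 0) : padicValRat 2 (a^2) = 2 * padicValRat 2 a := by
  rw [padicValRat.pow a]; norm_num

private lemma sq_ne_two (a : ℚ) : a ^ 2 ≠ 2 := by
  intro h
  have ha : a ≠ 0 := by rintro rfl; norm_num at h
  have := v2_sq a ha
  rw [h, v2_two] at this
  omega

private lemma v2_odd_int (z : ℤ) (h : Odd z) : padicValRat 2 (z : ℚ) = 0 := by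
  rw [padicValRat.of_int]
  have h2 : ¬ (2:ℤ) ∣ z := by
    rw [Int.odd_iff] at h; omega
  rw [padicValInt.eq_zero_of_not_dvd h2]
  norm_num

private lemma odd_num_den (b : ℚ) (hb : b ≠ 0) (h : padicValRat 2 b = 0) :
    Odd b.num ∧ Odd (b.den : ℤ) := by
  have hnum : b.num ≠ 0 := Rat.num_ne_zero.mpr hb
  have hden : b.den ≠ 0 := b.den_nz
  unfold padicValRat at h
  by_cases h2 : (2:ℤ) ∣ b.num
  · exfalso
    have hd : ¬ (2 ∣ b.den) := by
      intro hdd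
      have hred := b.reduced
      have : (2:ℕ) ∣ Nat.gcd b.num.natAbs b.den :=
        Nat.dvd_gcd (Int.natAbs_dvd_natAbs.mpr (by exact_mod_cast h2)) hdd
      rw [hred] at this; omega
    rw [padicValNat.eq_zero_of_not_dvd hd] at h
    have h1 : 1 ≤ padicValInt 2 b.num :=
      one_le_padicValNat_of_dvd (Int.natAbs_ne_zero.mpr hnum)
        (Int.natAbs_dvd_natAbs.mpr (by exact_mod_cast h2))
    omega
  · have hnumodd : Odd b.num := by
      rw [Int.odd_iff]; omega
    refine ⟨hnumodd, ?_⟩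
    rw [padicValInt.eq_zero_of_not_dvd h2] at h
    by_cases hdd : 2 ∣ b.den
    · have := one_le_padicValNat_of_dvd hden hdd
      omega
    · have : Odd b.den := Nat.odd_iff.mpr (by omega)
      exact_mod_cast this

private lemma eight_dvd_sq_sub (a b : ℤ) (ha : Odd a) (hb : Odd b) : (8:ℤ) ∣ a^2 - b^2 := by
  obtain ⟨i, rfl⟩ := ha
  obtain ⟨j, rfl⟩ := hb
  obtain ⟨u, hu⟩ : Even (i * (i+1)) := Int.even_mul_succ_self i
  obtain ⟨w, hw⟩ : Even (j * (j+1)) := Int.even_mul_succ_self j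
  exact ⟨u - w, by linear_combination 4*hu - 4*hw⟩

private lemma v2_int_nonneg (z : ℤ) : 0 ≤ padicValRat 2 (z : ℚ) := by
  rw [padicValRat.of_int]; positivity

private lemma v2_diff_sq_ge_three (b c : ℚ) (hb : b ≠ 0) (hc : c ≠ 0)
    (hvb : padicValRat 2 b = 0) (hvc : padicValRat 2 c = 0) (hne : c^2 - b^2 ≠ 0) :
    3 ≤ padicValRat 2 (c^2 - b^2) := by
  obtain ⟨hbn, hbd⟩ := odd_num_den b hb hvb
  obtain ⟨hcn, hcd⟩ := odd_num_den c hc hvc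
  set N : ℤ := (c.num * (b.den:ℤ))^2 - (b.num * (c.den:ℤ))^2 with hN
  set D : ℤ := ((c.den : ℤ) * (b.den : ℤ))^2 with hD
  have hDne : (D:ℚ) ≠ 0 := by
    have : (c.den:ℚ) ≠ 0 := by exact_mod_cast c.den_nz
    have : (b.den:ℚ) ≠ 0 := by exact_mod_cast b.den_nz
    push_cast; positivity
  have hrepr : c^2 - b^2 = (N : ℚ) / (D : ℚ) := by
    rw [eq_div_iff hDne]
    have hbden : (b.den:ℚ) ≠ 0 := by exact_mod_cast b.den_nz
    have hcden : (c.den:ℚ) ≠ 0 := by exact_mod_cast c.den_nz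
    have hbb : (b.num : ℚ) = b * (b.den : ℚ) := by
      have h := (div_eq_iff hbden).mp (Rat.num_div_den b); linarith
    have hcc : (c.num : ℚ) = c * (c.den : ℚ) := by
      have h := (div_eq_iff hcden).mp (Rat.num_div_den c); linarith
    rw [hN, hD]
    push_cast
    rw [hbb, hcc]; ring
  have hNne : (N:ℚ) ≠ 0 := by
    intro h0; rw [hrepr, h0, zero_div] at hne; exact hne rfl
  have hNne' : N ≠ 0 := by exact_mod_cast hNne
  obtain ⟨KK, hKK⟩ := eight_dvd_sq_sub (c.num * (b.den:ℤ)) (b.num * (c.den:ℤ))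
    (hcn.mul hbd) (hbn.mul hcd)
  have hKne : KK ≠ 0 := by rintro rfl; simp at hKK; exact hNne' hKK
  have hvD : padicValRat 2 (D:ℚ) = 0 := v2_odd_int D (by
    have := hcd.mul hbd
    exact this.pow)
  rw [hrepr, padicValRat.div hNne hDne, hvD, sub_zero, hN, hKK]
  push_cast
  rw [show ((8:ℚ) * (KK:ℚ)) = (8:ℚ) * (KK:ℚ) by ring,
    padicValRat.mul (by norm_num) (by exact_mod_cast hKne)]
  have h8 : padicValRat 2 (8:ℚ) = 3 := by
    have h8' : (8:ℚ) = 2^3 := by norm_num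
    rw [h8', padicValRat.pow, v2_two]; norm_num
  have := v2_int_nonneg KK
  omega

private lemma v2_drop (x : ℚ) (hx : padicValRat 2 x < 0) :
    x^3 - x ≠ 0 ∧
      padicValRat 2 ((x^2+1)^2 / (4*(x^3 - x))) = padicValRat 2 x - 2 := by
  have hx0 : x ≠ 0 := by rintro rfl; simp at hx
  have hx1 : x ≠ 1 := by rintro rfl; simp at hx
  have hxm1 : x ≠ -1 := by
    rintro rfl
    rw [show ((-1:ℚ)) = -(1:ℚ) by norm_num, padicValRat.neg] at hx; simp at hx
  have hfac : x^3 - x = x * (x-1) * (x+1) := by ring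
  have h3 : x^3 - x ≠ 0 := by
    rw [hfac]
    exact mul_ne_zero (mul_ne_zero hx0 (sub_ne_zero.mpr hx1)) (by
      intro h; exact hxm1 (by linarith))
  refine ⟨h3, ?_⟩
  set v := padicValRat 2 x with hv
  have hsq : padicValRat 2 (x^2) = 2*v := v2_sq x hx0
  have hcub : padicValRat 2 (x^3) = 3*v := by
    rw [padicValRat.pow x]; push_cast; ring
  have hA : padicValRat 2 (x^2 + 1) = 2*v := by
    rw [padicValRat.add_eq_of_lt (by positivity) (pow_ne_zero 2 hx0) one_ne_zero
      (by rw [hsq]; simp [padicValRat.one]; omega), hsq]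
  have hB : padicValRat 2 (x^3 - x) = 3*v := by
    have : x^3 - x = x^3 + (-x) := by ring
    rw [this, padicValRat.add_eq_of_lt (by rw [← this]; exact h3) (pow_ne_zero 3 hx0)
      (neg_ne_zero.mpr hx0) (by rw [hcub, padicValRat.neg, ← hv]; omega), hcub]
  have hA2 : (x^2+1) ≠ 0 := by positivity
  have h4B : (4:ℚ)*(x^3-x) ≠ 0 := mul_ne_zero (by norm_num) h3
  rw [padicValRat.div (pow_ne_zero 2 hA2) h4B,
    padicValRat.pow, hA,
    padicValRat.mul (show (4:ℚ) ≠ 0 by norm_num) h3, v2_four, hB]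
  push_cast; ring

private lemma v2_m_bounds (m : ℤ) (hm0 : m ≠ 0) (hm : Squarefree m) :
    0 ≤ padicValRat 2 (m:ℚ) ∧ padicValRat 2 (m:ℚ) ≤ 1 := by
  refine ⟨v2_int_nonneg m, ?_⟩
  rw [padicValRat.of_int]
  unfold padicValInt
  by_contra hgt
  push_neg at hgt
  have h2 : 2 ≤ padicValNat 2 m.natAbs := by omega
  have hdvd : (2:ℕ)^2 ∣ m.natAbs :=
    dvd_trans (pow_dvd_pow 2 h2) pow_padicValNat_dvd
  have hsf : Squarefree m.natAbs := Int.squarefree_natAbs.mpr hm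
  have h22 : (2:ℕ)*2 ∣ m.natAbs := by
    rw [show (2:ℕ)*2 = 2^2 by norm_num]; exact hdvd
  have := hsf 2 h22
  rw [Nat.isUnit_iff] at this
  omega

private lemma final_contradiction (m : ℤ) (hm0 : m ≠ 0) (hm : Squarefree m)
    (X ρ : ℚ) (hρ : ρ ≠ 0) (heq : (m:ℚ) * ρ^2 = X^3 - X)
    (hv : 0 ≤ padicValRat 2 ((X^2+1)^2 / (4*((m:ℚ)*ρ^2)))) : False := by
  have hmQ : (m:ℚ) ≠ 0 := Int.cast_ne_zero.mpr hm0
  have hd : (m:ℚ)*ρ^2 ≠ 0 := mul_ne_zero hmQ (pow_ne_zero 2 hρ)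
  have hden : 2*(m:ℚ)*ρ ≠ 0 := by
    refine mul_ne_zero (mul_ne_zero two_ne_zero hmQ) hρ
  set a := (X^2+1)/(2*(m:ℚ)*ρ) with ha_def
  set b := (X^2-2*X-1)/(2*(m:ℚ)*ρ) with hb_def
  set c := (X^2+2*X-1)/(2*(m:ℚ)*ρ) with hc_def
  set x := (X^2+1)^2/(4*((m:ℚ)*ρ^2)) with hx_def
  have hAne : X^2+1 ≠ 0 := by positivity
  have hBne : X^2-2*X-1 ≠ 0 := by
    intro h; exact sq_ne_two (X-1) (by linear_combination h)
  have hCne : X^2+2*X-1 ≠ 0 := by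
    intro h; exact sq_ne_two (X+1) (by linear_combination h)
  have ha : a ≠ 0 := div_ne_zero hAne hden
  have hb : b ≠ 0 := div_ne_zero hBne hden
  have hc : c ≠ 0 := div_ne_zero hCne hden
  have hxa : x = (m:ℚ) * a^2 := by
    rw [hx_def, ha_def]; field_simp; ring
  have key1 : (X^2+1)^2 = (X^2-2*X-1)^2 + 4*((m:ℚ)*ρ^2) := by rw [heq]; ring
  have key2 : (X^2+1)^2 = (X^2+2*X-1)^2 - 4*((m:ℚ)*ρ^2) := by rw [heq]; ring
  have key3 : (X^2+2*X-1)^2 - (X^2-2*X-1)^2 = 8*((m:ℚ)*ρ^2) := by rw [heq]; ring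
  have hxb : x - 1 = (m:ℚ) * b^2 := by
    rw [hx_def, hb_def, key1]; field_simp; ring
  have hxc : x + 1 = (m:ℚ) * c^2 := by
    rw [hx_def, hc_def, key2]; field_simp; ring
  have hcb : c^2 - b^2 = 2/(m:ℚ) := by
    have hstep : c^2 - b^2 = ((X^2+2*X-1)^2 - (X^2-2*X-1)^2)/((2*(m:ℚ)*ρ)^2) := by
      rw [hb_def, hc_def, div_pow, div_pow, div_sub_div_same]
    rw [hstep, key3, div_eq_div_iff (pow_ne_zero 2 hden) hmQ]
    ring
  have hbc : b^2 + c^2 = 2*a^2 := by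
    rw [ha_def, hb_def, hc_def]; field_simp; ring
  obtain ⟨hvm0, hvm1⟩ := v2_m_bounds m hm0 hm
  set vm := padicValRat 2 (m:ℚ) with hvm_def
  -- valuations nonneg
  have hva : 0 ≤ padicValRat 2 a := by
    have h1 : padicValRat 2 x = vm + 2 * padicValRat 2 a := by
      rw [hxa, padicValRat.mul hmQ (pow_ne_zero 2 ha), v2_sq a ha]
    omega
  have hx1ne : x - 1 ≠ 0 := by rw [hxb]; exact mul_ne_zero hmQ (pow_ne_zero 2 hb)
  have hx2ne : x + 1 ≠ 0 := by rw [hxc]; exact mul_ne_zero hmQ (pow_ne_zero 2 hc)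
  have hv1 : padicValRat 2 (1:ℚ) = 0 := padicValRat.one
  have hvm1' : padicValRat 2 (-1:ℚ) = 0 := by rw [padicValRat.neg]; exact hv1
  have hvxm1 : 0 ≤ padicValRat 2 (x - 1) := by
    have := padicValRat.min_le_padicValRat_add (p := 2) (q := x) (r := -1)
      (by rw [show x + (-1) = x - 1 by ring]; exact hx1ne)
    rw [show x + (-1) = x - 1 by ring, hvm1'] at this
    omega
  have hvxp1 : 0 ≤ padicValRat 2 (x + 1) := by
    have := padicValRat.min_le_padicValRat_add (p := 2) (q := x) (r := 1)
      (by rw [show x + 1 = x + 1 by ring]; exact hx2ne)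
    rw [hv1] at this
    omega
  have hvb : 0 ≤ padicValRat 2 b := by
    have h1 : padicValRat 2 (x-1) = vm + 2 * padicValRat 2 b := by
      rw [hxb, padicValRat.mul hmQ (pow_ne_zero 2 hb), v2_sq b hb]
    omega
  have hvc : 0 ≤ padicValRat 2 c := by
    have h1 : padicValRat 2 (x+1) = vm + 2 * padicValRat 2 c := by
      rw [hxc, padicValRat.mul hmQ (pow_ne_zero 2 hc), v2_sq c hc]
    omega
  -- valuation of the difference
  have hdiffne : c^2 - b^2 ≠ 0 := by
    rw [hcb]; exact div_ne_zero two_ne_zero hmQ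
  have hvdiff : padicValRat 2 (c^2 - b^2) = 1 - vm := by
    rw [hcb, padicValRat.div two_ne_zero hmQ, v2_two]
  have hsumne : b^2 + c^2 ≠ 0 := by
    rw [hbc]; exact mul_ne_zero two_ne_zero (pow_ne_zero 2 ha)
  have hvsum : padicValRat 2 (b^2 + c^2) = 1 + 2 * padicValRat 2 a := by
    rw [hbc, padicValRat.mul two_ne_zero (pow_ne_zero 2 ha), v2_two, v2_sq a ha]
  have hvb2 : padicValRat 2 (b^2) = 2 * padicValRat 2 b := v2_sq b hb
  have hvc2 : padicValRat 2 (c^2) = 2 * padicValRat 2 c := v2_sq c hc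
  by_cases hb0 : padicValRat 2 b = 0 <;> by_cases hc0 : padicValRat 2 c = 0
  · -- both units: difference has valuation ≥ 3
    have := v2_diff_sq_ge_three b c hb hc hb0 hc0 hdiffne
    omega
  · -- vb = 0, vc ≥ 1
    have hvcge : 1 ≤ padicValRat 2 c := by omega
    have h1 : padicValRat 2 (c^2 - b^2) = 0 := by
      rw [show c^2 - b^2 = c^2 + (-b^2) by ring,
        padicValRat.add_eq_min (by rw [show c^2 + (-b^2) = c^2 - b^2 by ring]; exact hdiffne)
          (pow_ne_zero 2 hc) (neg_ne_zero.mpr (pow_ne_zero 2 hb))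
          (by rw [hvc2, padicValRat.neg, hvb2]; omega),
        hvc2, padicValRat.neg, hvb2]
      omega
    have h2 : padicValRat 2 (b^2 + c^2) = 0 := by
      rw [padicValRat.add_eq_min hsumne (pow_ne_zero 2 hb) (pow_ne_zero 2 hc)
          (by rw [hvc2, hvb2]; omega), hvc2, hvb2]
      omega
    omega
  · -- vb ≥ 1, vc = 0 (symmetric)
    have hvbge : 1 ≤ padicValRat 2 b := by omega
    have h1 : padicValRat 2 (c^2 - b^2) = 0 := by
      rw [show c^2 - b^2 = c^2 + (-b^2) by ring,
        padicValRat.add_eq_min (by rw [show c^2 + (-b^2) = c^2 - b^2 by ring]; exact hdiffne)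
          (pow_ne_zero 2 hc) (neg_ne_zero.mpr (pow_ne_zero 2 hb))
          (by rw [hvc2, padicValRat.neg, hvb2]; omega),
        hvc2, padicValRat.neg, hvb2]
      omega
    have h2 : padicValRat 2 (b^2 + c^2) = 0 := by
      rw [padicValRat.add_eq_min hsumne (pow_ne_zero 2 hb) (pow_ne_zero 2 hc)
          (by rw [hvc2, hvb2]; omega), hvc2, hvb2]
      omega
    omega
  · -- both ≥ 1
    have := padicValRat.min_le_padicValRat_add (p := 2) (q := c^2) (r := -b^2)
      (by rw [show c^2 + (-b^2) = c^2 - b^2 by ring]; exact hdiffne)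
    rw [show c^2 + (-b^2) = c^2 - b^2 by ring, hvc2, padicValRat.neg, hvb2] at this
    omega


section Aux
variable {K : Type} [Field K] [Algebra ℚ K]

noncomputable def xcoord : (E⁄K).Point → K
  | .zero => 0
  | @WeierstrassCurve.Affine.Point.some _ _ _ x _ _ => x

lemma xcoord_some {x y : K} (h : (E.baseChange K).toAffine.Nonsingular x y) :
    xcoord (Point.some _ _ h) = x := rfl

lemma some_eq_some {x₁ y₁ x₂ y₂ : K} (h₁ : (E.baseChange K).toAffine.Nonsingular x₁ y₁)
    (h₂ : (E.baseChange K).toAffine.Nonsingular x₂ y₂) (hx : x₁ = x₂) (hy : y₁ = y₂) :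
    Point.some _ _ h₁ = Point.some _ _ h₂ := by subst hx; subst hy; rfl

lemma exists_repr {m : ℤ} {sm : K} (hsm : sm ^ 2 = (m : K))
    (hK : Algebra.adjoin ℚ {sm} = ⊤) (z : K) :
    ∃ p q : ℚ, z = algebraMap ℚ K p + algebraMap ℚ K q * sm := by
  have hz : z ∈ Algebra.adjoin ℚ {sm} := by rw [hK]; exact Algebra.mem_top
  induction hz using Algebra.adjoin_induction with
  | mem x hx =>
      rcases Set.mem_singleton_iff.mp hx with rfl
      exact ⟨0, 1, by simp⟩
  | algebraMap r => exact ⟨r, 0, by simp⟩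
  | add u v hu hv ihu ihv =>
      obtain ⟨p, q, rfl⟩ := ihu
      obtain ⟨p', q', rfl⟩ := ihv
      exact ⟨p + p', q + q', by push_cast; ring⟩
  | mul u v hu hv ihu ihv =>
      obtain ⟨p, q, rfl⟩ := ihu
      obtain ⟨p', q', rfl⟩ := ihv
      refine ⟨p * p' + q * q' * m, p * q' + q * p', ?_⟩
      have h2 : sm * sm = (m : K) := by rw [← pow_two, hsm]
      simp only [map_add, map_mul, map_intCast]
      linear_combination (algebraMap ℚ K q * algebraMap ℚ K q') * h2

lemma sm_ne_zero {sm : K} (hsm' : sm ∉ Set.range (algebraMap ℚ K)) : sm ≠ 0 := by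
  rintro rfl; exact hsm' ⟨0, by simp⟩

lemma repr_unique {sm : K} (hsm' : sm ∉ Set.range (algebraMap ℚ K)) {p q : ℚ}
    (h : algebraMap ℚ K p + algebraMap ℚ K q * sm = 0) : p = 0 ∧ q = 0 := by
  have hinj : Function.Injective (algebraMap ℚ K) := (algebraMap ℚ K).injective
  by_cases hq : q = 0
  · subst hq
    simp only [map_zero, zero_mul, add_zero] at h
    exact ⟨hinj (by simpa using h), rfl⟩
  · exfalso
    apply hsm'
    have hkq : algebraMap ℚ K q ≠ 0 := fun h0 => hq (hinj (by simpa using h0))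
    refine ⟨-p/q, ?_⟩
    rw [map_div₀, map_neg, div_eq_iff hkq]
    linear_combination -h

variable {m : ℤ} {sm : K} {σ : K ≃ₐ[ℚ] K}

lemma fixed_repr (hsm : sm ^ 2 = (m : K)) (hK : Algebra.adjoin ℚ {sm} = ⊤)
    (hsm' : sm ∉ Set.range (algebraMap ℚ K)) (hσ : σ sm = -sm)
    {z : K} (hz : σ z = z) : ∃ p : ℚ, z = algebraMap ℚ K p := by
  obtain ⟨p, q, rfl⟩ := exists_repr hsm hK z
  have hσz : σ (algebraMap ℚ K p + algebraMap ℚ K q * sm)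
      = algebraMap ℚ K p - algebraMap ℚ K q * sm := by
    rw [map_add, map_mul, σ.commutes, σ.commutes, hσ]; ring
  rw [hσz] at hz
  haveI : CharZero K := charZero_of_injective_algebraMap (algebraMap ℚ K).injective
  have h2 : (2:K) * (algebraMap ℚ K q * sm) = 0 := by linear_combination -hz
  rcases mul_eq_zero.mp h2 with h | h
  · exact absurd h two_ne_zero
  rcases mul_eq_zero.mp h with h | h
  · have hq : q = 0 := (algebraMap ℚ K).injective (by simpa using h)
    exact ⟨p, by rw [hq]; simp⟩
  · exact absurd h (sm_ne_zero hsm')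

lemma anti_repr (hsm : sm ^ 2 = (m : K)) (hK : Algebra.adjoin ℚ {sm} = ⊤)
    (hsm' : sm ∉ Set.range (algebraMap ℚ K)) (hσ : σ sm = -sm)
    {z : K} (hz : σ z = -z) : ∃ q : ℚ, z = algebraMap ℚ K q * sm := by
  obtain ⟨p, q, rfl⟩ := exists_repr hsm hK z
  have hσz : σ (algebraMap ℚ K p + algebraMap ℚ K q * sm)
      = algebraMap ℚ K p - algebraMap ℚ K q * sm := by
    rw [map_add, map_mul, σ.commutes, σ.commutes, hσ]; ring
  rw [hσz] at hz
  haveI : CharZero K := charZero_of_injective_algebraMap (algebraMap ℚ K).injective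
  have h2 : (2:K) * algebraMap ℚ K p = 0 := by linear_combination hz
  rcases mul_eq_zero.mp h2 with h | h
  · exact absurd h two_ne_zero
  have hp : p = 0 := (algebraMap ℚ K).injective (by simpa using h)
  exact ⟨q, by rw [hp]; simp⟩

end Aux

section Curve
variable {K : Type} [Field K] [Algebra ℚ K]

lemma EK_a₁ : (E.baseChange K).toAffine.a₁ = 0 := by
  simp [E, WeierstrassCurve.baseChange, WeierstrassCurve.map]
lemma EK_a₂ : (E.baseChange K).toAffine.a₂ = 0 := by
  simp [E, WeierstrassCurve.baseChange, WeierstrassCurve.map]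
lemma EK_a₃ : (E.baseChange K).toAffine.a₃ = 0 := by
  simp [E, WeierstrassCurve.baseChange, WeierstrassCurve.map]
lemma EK_a₄ : (E.baseChange K).toAffine.a₄ = -1 := by
  simp [E, WeierstrassCurve.baseChange, WeierstrassCurve.map]
lemma EK_a₆ : (E.baseChange K).toAffine.a₆ = 0 := by
  simp [E, WeierstrassCurve.baseChange, WeierstrassCurve.map]

lemma EK_negY (x y : K) : (E.baseChange K).toAffine.negY x y = -y := by
  simp [negY, E, WeierstrassCurve.baseChange, WeierstrassCurve.map]

lemma EK_equation {x y : K} (h : (E.baseChange K).toAffine.Nonsingular x y) :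
    y^2 = x^3 - x := by
  have := h.1
  rw [equation_iff, EK_a₁, EK_a₂, EK_a₃, EK_a₄, EK_a₆] at this
  linear_combination this

lemma mem_minus_iff (σ : K ≃ₐ[ℚ] K) (P : (E⁄K).Point) :
    P ∈ minusSubgroup K σ ↔ Affine.Point.map (W' := E) σ.toAlgHom P = -P := by
  rw [minusSubgroup, AddMonoidHom.mem_ker, AddMonoidHom.add_apply, AddMonoidHom.id_apply,
    add_eq_zero_iff_eq_neg]

lemma minus_some_coords {σ : K ≃ₐ[ℚ] K} {x y : K}
    {h : (E.baseChange K).toAffine.Nonsingular x y}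
    (hP : (Point.some _ _ h : (E⁄K).Point) ∈ minusSubgroup K σ) : σ x = x ∧ σ y = -y := by
  rw [mem_minus_iff] at hP
  rw [Point.map_some, Point.neg_some] at hP
  obtain ⟨hx, hy⟩ := Point.some.inj hP
  rw [EK_negY] at hy
  exact ⟨hx, hy⟩

lemma char0K : (2:K) ≠ 0 := by
  haveI : CharZero K := charZero_of_injective_algebraMap (algebraMap ℚ K).injective
  exact two_ne_zero

lemma double_some {x y : K} (hns : (E.baseChange K).toAffine.Nonsingular x y) (hy : y ≠ 0) :
    2 • (Point.some _ _ hns : (E⁄K).Point) ≠ 0 ∧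
    xcoord (2 • (Point.some _ _ hns : (E⁄K).Point)) = ((3*x^2 - 1)/(2*y))^2 - 2*x := by
  have hyne : y ≠ (E.baseChange K).toAffine.negY x y := by
    rw [EK_negY]
    intro h
    exact hy (by
      have h2 : (2:K) * y = 0 := by linear_combination h
      rcases mul_eq_zero.mp h2 with h' | h'
      · exact absurd h' char0K
      · exact h')
  rw [two_nsmul, Point.add_self_of_Y_ne hyne]
  refine ⟨Point.some_ne_zero _, ?_⟩
  rw [xcoord_some]
  rw [slope_of_Y_ne rfl hyne, EK_negY, sub_neg_eq_add, show y + y = 2*y from by ring]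
  simp only [addX, EK_a₁, EK_a₂, EK_a₃, EK_a₄]
  ring
end Curve

section Minus
variable {K : Type} [Field K] [Algebra ℚ K] {m : ℤ} {sm : K} {σ : K ≃ₐ[ℚ] K}

lemma minus_point_data (hsm : sm^2 = (m:K)) (hK : Algebra.adjoin ℚ {sm} = ⊤)
    (hsm' : sm ∉ Set.range (algebraMap ℚ K)) (hσ : σ sm = -sm)
    {P : (E⁄K).Point} (hP : P ∈ minusSubgroup K σ) (hP0 : P ≠ 0) :
    ∃ (x₀ r : ℚ) (hns : (E.baseChange K).toAffine.Nonsingular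
        (algebraMap ℚ K x₀) (algebraMap ℚ K r * sm)),
      P = Point.some _ _ hns ∧ (m:ℚ) * r^2 = x₀^3 - x₀ := by
  rcases P with _ | @⟨x, y, h⟩
  · exact absurd rfl hP0
  obtain ⟨hx, hy⟩ := minus_some_coords hP
  obtain ⟨x₀, hx₀⟩ := fixed_repr hsm hK hsm' hσ hx
  obtain ⟨r, hr⟩ := anti_repr hsm hK hsm' hσ hy
  subst hx₀; subst hr
  refine ⟨x₀, r, h, rfl, ?_⟩
  have heqK := EK_equation h
  have h1 : algebraMap ℚ K ((m:ℚ)*r^2) = (algebraMap ℚ K r * sm)^2 := by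
    rw [mul_pow, hsm, map_mul, map_intCast, map_pow]; ring
  have h2 : algebraMap ℚ K (x₀^3 - x₀) = (algebraMap ℚ K x₀)^3 - algebraMap ℚ K x₀ := by
    rw [map_sub, map_pow]
  exact (algebraMap ℚ K).injective (by rw [h1, h2, heqK])

lemma minus_double_x (hsm : sm^2 = (m:K)) (hsm' : sm ∉ Set.range (algebraMap ℚ K))
    {x₀ r : ℚ} (hm0 : m ≠ 0) (hr : r ≠ 0)
    (hns : (E.baseChange K).toAffine.Nonsingular (algebraMap ℚ K x₀) (algebraMap ℚ K r * sm))
    (heq : (m:ℚ)*r^2 = x₀^3 - x₀) :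
    2 • (Point.some _ _ hns : (E⁄K).Point) ≠ 0 ∧
    xcoord (2 • (Point.some _ _ hns : (E⁄K).Point))
      = algebraMap ℚ K ((x₀^2+1)^2/(4*((m:ℚ)*r^2))) := by
  have hkr : algebraMap ℚ K r ≠ 0 :=
    fun h => hr ((algebraMap ℚ K).injective (by simpa using h))
  have hy : algebraMap ℚ K r * sm ≠ 0 := mul_ne_zero hkr (sm_ne_zero hsm')
  obtain ⟨h1, h2⟩ := double_some hns hy
  refine ⟨h1, ?_⟩
  rw [h2]
  have hmQ : (m:ℚ) ≠ 0 := Int.cast_ne_zero.mpr hm0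
  have hd : (4:ℚ)*((m:ℚ)*r^2) ≠ 0 :=
    mul_ne_zero (by norm_num) (mul_ne_zero hmQ (pow_ne_zero 2 hr))
  have key : (3*x₀^2-1)^2 = (x₀^2+1)^2 + 8*x₀*((m:ℚ)*r^2) := by rw [heq]; ring
  have hrat : (x₀^2+1)^2/(4*((m:ℚ)*r^2)) = (3*x₀^2-1)^2/(4*((m:ℚ)*r^2)) - 2*x₀ := by
    rw [key]; field_simp; ring
  rw [hrat, map_sub, map_div₀]
  congr 1
  · rw [div_pow]
    congr 1
    · simp only [map_pow, map_sub, map_mul, map_one, map_ofNat]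
    · rw [mul_pow]
      simp only [map_mul, map_pow, map_ofNat, map_intCast]
      rw [mul_pow]
      linear_combination (4*(algebraMap ℚ K r)^2) * hsm
  · simp only [map_mul, map_ofNat]
end Minus

section Descent
variable {K : Type} [Field K] [Algebra ℚ K] {m : ℤ} {sm : K} {σ : K ≃ₐ[ℚ] K}

lemma double_eq_zero_of_r_zero {x₀ : ℚ}
    (hns : (E.baseChange K).toAffine.Nonsingular
      (algebraMap ℚ K x₀) (algebraMap ℚ K 0 * sm)) :
    2 • (Point.some _ _ hns : (E⁄K).Point) = 0 := by
  rw [two_nsmul]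
  apply Point.add_self_of_Y_eq
  rw [EK_negY]
  simp

lemma minus_val_nonneg (hsm : sm^2 = (m:K)) (hK : Algebra.adjoin ℚ {sm} = ⊤)
    (hsm' : sm ∉ Set.range (algebraMap ℚ K)) (hσ : σ sm = -sm) (hm0 : m ≠ 0)
    {P : (E⁄K).Point} (hP : P ∈ minusSubgroup K σ) (hfin : IsOfFinAddOrder P)
    {x₀ r : ℚ}
    {hns : (E.baseChange K).toAffine.Nonsingular
      (algebraMap ℚ K x₀) (algebraMap ℚ K r * sm)}
    (hPeq : P = Point.some _ _ hns) (heq : (m:ℚ)*r^2 = x₀^3-x₀) :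
    0 ≤ padicValRat 2 x₀ := by
  by_contra hneg
  push_neg at hneg
  have key : ∀ j : ℕ, ∃ (x' r' : ℚ) (hns' : (E.baseChange K).toAffine.Nonsingular
      (algebraMap ℚ K x') (algebraMap ℚ K r' * sm)),
      (2^j) • P = Point.some _ _ hns' ∧ (m:ℚ)*r'^2 = x'^3 - x'
      ∧ padicValRat 2 x' = padicValRat 2 x₀ - 2*j := by
    intro j
    induction j with
    | zero => exact ⟨x₀, r, hns, by simpa using hPeq, heq, by simp⟩
    | succ n ih =>
        obtain ⟨x', r', hns', hPeq', heq', hval'⟩ := ih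
        have hvneg : padicValRat 2 x' < 0 := by
          rw [hval']; push_cast; omega
        obtain ⟨h3ne, hdrop⟩ := v2_drop x' hvneg
        have hr' : r' ≠ 0 := by
          rintro rfl
          exact h3ne (by linear_combination -heq')
        obtain ⟨hne0, hx2⟩ := minus_double_x hsm hsm' hm0 hr' hns' heq'
        have hmem : ((2^(n+1)) • P) ∈ minusSubgroup K σ :=
          AddSubgroup.nsmul_mem _ hP _
        have h2eq : (2^(n+1)) • P = 2 • ((2^n) • P) := by
          rw [show (2^(n+1)) = 2 * 2^n from pow_succ' 2 n, mul_nsmul']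
        have hne : (2^(n+1)) • P ≠ 0 := by
          rw [h2eq, hPeq']; exact hne0
        obtain ⟨x'', r'', hns'', hPeq'', heq''⟩ :=
          minus_point_data hsm hK hsm' hσ hmem hne
        have hxk : algebraMap ℚ K x''
            = algebraMap ℚ K ((x'^2+1)^2/(4*((m:ℚ)*r'^2))) := by
          rw [← xcoord_some hns'', ← hPeq'', h2eq, hPeq', hx2]
        have hxx : x'' = (x'^2+1)^2/(4*((m:ℚ)*r'^2)) :=
          (algebraMap ℚ K).injective hxk
        refine ⟨x'', r'', hns'', hPeq'', heq'', ?_⟩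
        rw [hxx, show (4*((m:ℚ)*r'^2)) = 4*(x'^3-x') from by rw [heq'], hdrop, hval']
        push_cast
        ring
  have hinj : Function.Injective (fun j : ℕ => (2^j) • P : ℕ → (E⁄K).Point) := by
    intro a b hab
    obtain ⟨xa, ra, hnsa, hpa, _, hva⟩ := key a
    obtain ⟨xb, rb, hnsb, hpb, _, hvb⟩ := key b
    simp only at hab
    rw [hpa, hpb] at hab
    have hxeq : algebraMap ℚ K xa = algebraMap ℚ K xb := by
      rw [← xcoord_some hnsa, ← xcoord_some hnsb, hab]
    have hx : xa = xb := (algebraMap ℚ K).injective hxeq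
    rw [hx, hvb] at hva
    have : (2:ℤ)*a = 2*b := by push_cast at hva; omega
    omega
  have hfinrange : (Set.range (fun j : ℕ => (2^j) • P : ℕ → (E⁄K).Point)).Finite := by
    have hn : 0 < addOrderOf P := hfin.addOrderOf_pos
    apply Set.Finite.subset (((Set.finite_Iio (addOrderOf P))).image (fun i => i • P))
    rintro _ ⟨j, rfl⟩
    exact ⟨2^j % addOrderOf P, Nat.mod_lt _ hn, mod_addOrderOf_nsmul P (2^j)⟩
  exact Set.infinite_range_of_injective hinj hfinrange

lemma two_torsion_coords {x y : K} (hns : (E.baseChange K).toAffine.Nonsingular x y)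
    (h2 : 2 • (Point.some _ _ hns : (E⁄K).Point) = 0) :
    y = 0 ∧ (x = 0 ∨ x = 1 ∨ x = -1) := by
  by_cases hyne : y = (E.baseChange K).toAffine.negY x y
  case neg =>
    exfalso
    rw [two_nsmul, Point.add_self_of_Y_ne hyne] at h2
    exact Point.some_ne_zero _ h2
  rw [EK_negY] at hyne
  have hy0 : y = 0 := by
    have h2y : (2:K)*y = 0 := by linear_combination hyne
    rcases mul_eq_zero.mp h2y with h|h
    · exact absurd h char0K
    · exact h
  refine ⟨hy0, ?_⟩
  have heq := EK_equation hns
  rw [hy0] at heq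
  have hfac : x * (x-1) * (x+1) = 0 := by linear_combination -heq
  rcases mul_eq_zero.mp hfac with h|h
  · rcases mul_eq_zero.mp h with h'|h'
    · exact Or.inl h'
    · exact Or.inr (Or.inl (by linear_combination h'))
  · exact Or.inr (Or.inr (by linear_combination h))

lemma two_torsion_mem (σ : K ≃ₐ[ℚ] K) {P : (E⁄K).Point} (h2 : 2 • P = 0) :
    P ∈ minusSubgroup K σ := by
  rcases P with _ | @⟨x, y, h⟩
  · exact (minusSubgroup K σ).zero_mem
  obtain ⟨hy0, hx⟩ := two_torsion_coords h h2
  rw [mem_minus_iff, Point.map_some, Point.neg_some]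
  apply some_eq_some
  · rcases hx with rfl|rfl|rfl <;> simp
  · rw [hy0, EK_negY]
    simp

lemma order4_contradiction (hm0 : m ≠ 0) (x₀ r : ℚ) (hr : r ≠ 0)
    (heq : (m:ℚ)*r^2 = x₀^3-x₀) (e : ℚ) (he : e = 0 ∨ e = 1 ∨ e = -1)
    (hx : (x₀^2+1)^2/(4*((m:ℚ)*r^2)) = e) : False := by
  have hmQ : (m:ℚ) ≠ 0 := Int.cast_ne_zero.mpr hm0
  have hd : (4:ℚ)*((m:ℚ)*r^2) ≠ 0 :=
    mul_ne_zero (by norm_num) (mul_ne_zero hmQ (pow_ne_zero 2 hr))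
  rw [div_eq_iff hd, heq] at hx
  rcases he with rfl|rfl|rfl
  · have hpos : (0:ℚ) < (x₀^2+1)^2 := by positivity
    rw [hx] at hpos
    simp at hpos
  · have hz : (x₀^2-2*x₀-1)^2 = 0 := by linear_combination hx
    have h0 : x₀^2-2*x₀-1 = 0 := by
      exact pow_eq_zero_iff (by norm_num) |>.mp hz
    exact sq_ne_two (x₀-1) (by linear_combination h0)
  · have hz : (x₀^2+2*x₀-1)^2 = 0 := by linear_combination hx
    have h0 : x₀^2+2*x₀-1 = 0 := by
      exact pow_eq_zero_iff (by norm_num) |>.mp hz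
    exact sq_ne_two (x₀+1) (by linear_combination h0)

end Descent

/-- for a square-free integer `m ≠ 0, 1`, the torsion subgroup of
`E(ℚ(√m))⁻` is exactly the `2`-torsion `E[2]`. -/
theorem torsion_of_minus_part_eq_two_torsion (m : ℤ) (hm0 : m ≠ 0) (hm1 : m ≠ 1)
    (hm : Squarefree m)
    (K : Type) [Field K] [Algebra ℚ K]
    (sm : K) (hsm : sm ^ 2 = (m : K)) (hK : Algebra.adjoin ℚ {sm} = ⊤)
    (hsm' : sm ∉ Set.range (algebraMap ℚ K))
    (σ : K ≃ₐ[ℚ] K) (hσ : σ sm = -sm) :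
    {P : (E⁄K).Point | P ∈ minusSubgroup K σ ∧ IsOfFinAddOrder P} = {P : (E⁄K).Point | 2 • P = 0} := by
  ext P
  simp only [Set.mem_setOf_eq]
  constructor
  · rintro ⟨hP, hfin⟩
    by_contra h2
    have hP0 : P ≠ 0 := by rintro rfl; exact h2 (smul_zero 2)
    have hn : 0 < addOrderOf P := hfin.addOrderOf_pos
    have hndvd : ¬ addOrderOf P ∣ 2 := fun hd => h2 (addOrderOf_dvd_iff_nsmul_eq_zero.mp hd)
    by_cases ht : ∃ q : ℕ, q.Prime ∧ Odd q ∧ q ∣ addOrderOf P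
    · -- odd prime order case
      obtain ⟨q, hq, hodd, hdvd⟩ := ht
      set Q : (E⁄K).Point := (addOrderOf P / q) • P with hQdef
      have hdq : (addOrderOf P / q) ∣ addOrderOf P := Nat.div_dvd_of_dvd hdvd
      have hdq0 : addOrderOf P / q ≠ 0 := by
        have := Nat.div_pos (Nat.le_of_dvd hn hdvd) hq.pos
        omega
      have horder : addOrderOf Q = q := by
        rw [hQdef, addOrderOf_nsmul_of_dvd hdq0 hdq, Nat.div_div_self hdvd (by omega)]
      have hQmem : Q ∈ minusSubgroup K σ := AddSubgroup.nsmul_mem _ hP _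
      have hqQ : q • Q = 0 := by rw [← horder]; exact addOrderOf_nsmul_eq_zero Q
      have hQfin : IsOfFinAddOrder Q :=
        isOfFinAddOrder_iff_nsmul_eq_zero.mpr ⟨q, hq.pos, hqQ⟩
      have hQ0 : Q ≠ 0 := by
        intro h0
        rw [h0, addOrderOf_zero] at horder
        exact hq.one_lt.ne horder
      have h2Q : 2 • Q ≠ 0 := by
        intro h0
        have hdd : q ∣ 2 := by rw [← horder]; exact addOrderOf_dvd_of_nsmul_eq_zero h0
        have hq2 : q = 2 := (Nat.prime_dvd_prime_iff_eq hq Nat.prime_two).mp hdd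
        rw [Nat.odd_iff] at hodd
        omega
      set R : (E⁄K).Point := ((q+1)/2) • Q with hRdef
      have hR2 : 2 • R = Q := by
        rw [hRdef, ← mul_nsmul', show 2*((q+1)/2) = q+1 from by
          rw [Nat.odd_iff] at hodd; omega]
        rw [succ_nsmul, hqQ, zero_add]
      have hRmem : R ∈ minusSubgroup K σ := AddSubgroup.nsmul_mem _ hQmem _
      have hRfin : IsOfFinAddOrder R :=
        isOfFinAddOrder_iff_nsmul_eq_zero.mpr ⟨q, hq.pos, by
          rw [hRdef, ← mul_nsmul', mul_comm, mul_nsmul', hqQ, smul_zero]⟩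
      have hR0 : R ≠ 0 := fun h0 => hQ0 (by rw [← hR2, h0, smul_zero])
      obtain ⟨X, ρ, hnsR, hReq, heqR⟩ := minus_point_data hsm hK hsm' hσ hRmem hR0
      have hρ : ρ ≠ 0 := by
        rintro rfl
        apply hQ0
        rw [← hR2, hReq]
        exact double_eq_zero_of_r_zero hnsR
      obtain ⟨hne0, hx2⟩ := minus_double_x hsm hsm' hm0 hρ hnsR heqR
      obtain ⟨xq, rq, hnsQ, hQeq, heqQ⟩ := minus_point_data hsm hK hsm' hσ hQmem hQ0
      have hvq : 0 ≤ padicValRat 2 xq :=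
        minus_val_nonneg hsm hK hsm' hσ hm0 hQmem hQfin hQeq heqQ
      have hxk : algebraMap ℚ K xq = algebraMap ℚ K ((X^2+1)^2/(4*((m:ℚ)*ρ^2))) := by
        rw [← xcoord_some hnsQ, ← hQeq, ← hR2, hReq, hx2]
      have hxq : xq = (X^2+1)^2/(4*((m:ℚ)*ρ^2)) := (algebraMap ℚ K).injective hxk
      exact final_contradiction m hm0 hm X ρ hρ heqR (by rw [← hxq]; exact hvq)
    · -- 2-power order case
      push_neg at ht
      have hpow : addOrderOf P = 2 ^ (addOrderOf P).primeFactorsList.length := by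
        apply Nat.eq_prime_pow_of_unique_prime_dvd (by omega)
        intro d hd hdd
        by_contra hne2
        exact ht d hd (hd.odd_of_ne_two hne2) hdd
      set k := (addOrderOf P).primeFactorsList.length with hkdef
      have hk2 : 2 ≤ k := by
        by_contra hlt
        push_neg at hlt
        interval_cases k <;> rw [hpow] at hndvd <;> simp at hndvd
      set Q : (E⁄K).Point := (2^(k-2)) • P with hQdef
      have hdvd4 : (2:ℕ)^(k-2) ∣ addOrderOf P := by
        rw [hpow]; exact pow_dvd_pow 2 (by omega)
      have horder : addOrderOf Q = 4 := by
        rw [hQdef, addOrderOf_nsmul_of_dvd (by positivity) hdvd4, hpow,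
          Nat.pow_div (by omega) (by norm_num), show k - (k-2) = 2 from by omega]
      have hQmem : Q ∈ minusSubgroup K σ := AddSubgroup.nsmul_mem _ hP _
      have hQ0 : Q ≠ 0 := by
        intro h0
        rw [h0, addOrderOf_zero] at horder
        omega
      have h2Q : 2 • Q ≠ 0 := by
        intro h0
        have hdd := addOrderOf_dvd_of_nsmul_eq_zero h0
        rw [horder] at hdd
        omega
      have h4Q : 2 • (2 • Q) = 0 := by
        rw [← mul_nsmul', show (2*2:ℕ) = 4 from rfl, ← horder]
        exact addOrderOf_nsmul_eq_zero Q
      obtain ⟨x₀, r, hnsQ, hQeq, heqQ⟩ := minus_point_data hsm hK hsm' hσ hQmem hQ0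
      have hr : r ≠ 0 := by
        rintro rfl
        apply h2Q
        rw [hQeq]
        exact double_eq_zero_of_r_zero hnsQ
      obtain ⟨hne0, hx2⟩ := minus_double_x hsm hsm' hm0 hr hnsQ heqQ
      have hTmem : (2 • Q) ∈ minusSubgroup K σ := AddSubgroup.nsmul_mem _ hQmem _
      obtain ⟨xt, rt, hnsT, hTeq, _⟩ := minus_point_data hsm hK hsm' hσ hTmem h2Q
      have h2T : 2 • (Point.some _ _ hnsT : (E⁄K).Point) = 0 := by rw [← hTeq]; exact h4Q
      obtain ⟨hyT, hxT⟩ := two_torsion_coords hnsT h2T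
      have hxe : xt = 0 ∨ xt = 1 ∨ xt = -1 := by
        rcases hxT with h|h|h
        · exact Or.inl ((algebraMap ℚ K).injective (by simpa using h))
        · exact Or.inr (Or.inl ((algebraMap ℚ K).injective (by simpa using h)))
        · exact Or.inr (Or.inr ((algebraMap ℚ K).injective (by simpa using h)))
      have hxk : algebraMap ℚ K xt = algebraMap ℚ K ((x₀^2+1)^2/(4*((m:ℚ)*r^2))) := by
        rw [← xcoord_some hnsT, ← hTeq, hQeq, hx2]
      have hxt : (x₀^2+1)^2/(4*((m:ℚ)*r^2)) = xt :=
        ((algebraMap ℚ K).injective hxk).symm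
      exact order4_contradiction hm0 x₀ r hr heqQ xt hxe hxt
  · intro h2
    exact ⟨two_torsion_mem σ h2, isOfFinAddOrder_iff_nsmul_eq_zero.mpr ⟨2, by norm_num, h2⟩⟩
end

section
/- The Mordell–Weil group E'(ℚ) of the elliptic curve E': y² = x³ + 4x has rank 0, and its torsion subgroup is cyclic of order 4, generated by (2, 4). -/
lemma sq_mod4 (c : ℤ) : c^2 % 4 = 0 ∨ c^2 % 4 = 1 := by
  rcases Int.even_or_odd c with ⟨k, rfl⟩ | ⟨k, rfl⟩
  · left; have : (k+k)^2 = 4*k^2 := by ring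
    rw [this]; omega
  · right; have : (2*k+1)^2 = 4*(k^2+k) + 1 := by ring
    rw [this]; omega

lemma odd_sq_mod8 {c : ℤ} (h : c % 2 = 1) : c^2 % 8 = 1 := by
  obtain ⟨j, rfl⟩ : ∃ j, c = 2*j+1 := ⟨c/2, by omega⟩
  obtain ⟨m, hm⟩ := Int.even_mul_succ_self j
  have : (2*j+1)^2 = 8*m + 1 := by rw [show (2*j+1)^2 = 4*(j*(j+1))+1 by ring, hm]; ring
  rw [this]; omega

lemma odd_pow4_mod8 {b : ℤ} (h : b % 2 = 1) : b^4 % 8 = 1 := by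
  have h2 : b^2 % 2 = 1 := by have := odd_sq_mod8 h; omega
  have := odd_sq_mod8 h2
  rw [← pow_mul] at this; norm_num at this; exact this

lemma isCoprime_two_of_odd {e : ℤ} (h : e % 2 = 1) : IsCoprime (2 : ℤ) e :=
  ⟨-(e/2), 1, by omega⟩

lemma int_pow4_of_coprime {v w d : ℤ} (h : IsCoprime v w) (hv : 0 < v) (he : v * w = d^4) :
    ∃ r : ℤ, 0 < r ∧ v = r^4 := by
  obtain ⟨r, hr⟩ := exists_associated_pow_of_mul_eq_pow' h he
  rw [Int.associated_iff] at hr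
  rcases hr with hr | hr
  · have hr0 : r ≠ 0 := by rintro rfl; rw [← hr] at hv; norm_num at hv
    refine ⟨|r|, abs_pos.mpr hr0, ?_⟩
    rw [← hr, ← abs_pow, abs_of_nonneg (by positivity)]
  · exfalso; nlinarith [sq_nonneg (r^2), hv, hr]

lemma no_fourth_diff_core {A d e : ℤ} (hA : 0 < A) (hA2 : A % 2 = 1) (hd : d ≠ 0)
    (he2 : e % 2 = 1) (hde : IsCoprime d e) (heq : A^2 = 4*d^4 + e^4)
    (IH : ∀ a' b' c' : ℤ, a'.natAbs < A.natAbs → 0 < b' → 0 < c' → a'^4 = b'^4 + c'^2 → False) :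
    False := by
  -- A coprime to e
  have h2e : IsCoprime (2:ℤ) e := isCoprime_two_of_odd he2
  have h4e : IsCoprime (4:ℤ) e := by
    have := h2e.mul_left h2e; norm_num at this; exact this
  have hd4e : IsCoprime (4*d^4) e := h4e.mul_left (hde.pow_left)
  have hA2e : IsCoprime (A^2) e := by
    have h1 : IsCoprime (4*d^4 + e*e^3) e := hd4e.add_mul_left_left (e^3)
    have h2 : A^2 = 4*d^4 + e*e^3 := by rw [heq]; ring
    rw [h2]; exact h1
  have hAe : IsCoprime A e := (IsCoprime.pow_left_iff (by norm_num)).mp hA2e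
  have hd4pos : (1:ℤ) ≤ d^4 := by
    have h0 : 0 < d^4 := by positivity
    omega
  have hAe2 : e^2 < A := by nlinarith [sq_nonneg (A - e^2), sq_nonneg (A + e^2), sq_nonneg e]
  -- halves
  have hAodd : Odd A := Int.odd_iff.mpr hA2
  have he2odd : Odd (e^2) := Int.odd_iff.mpr (by have := odd_sq_mod8 he2; omega)
  obtain ⟨v, hv⟩ : Even (A - e^2) := hAodd.sub_odd he2odd
  obtain ⟨w, hw⟩ : Even (A + e^2) := hAodd.add_odd he2odd
  have hvpos : 0 < v := by linarith
  have hwpos : 0 < w := by nlinarith [sq_nonneg e]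
  have hvw : v * w = d^4 := by nlinarith [hv, hw, heq]
  have hA_vw : A = v + w := by linarith
  have he_vw : w - v = e^2 := by linarith
  -- coprimality of v and w
  have hgcd : IsCoprime v w := by
    rw [Int.isCoprime_iff_gcd_eq_one]
    have h1 : (↑(Int.gcd v w):ℤ) ∣ v := Int.gcd_dvd_left _ _
    have h2 : (↑(Int.gcd v w):ℤ) ∣ w := Int.gcd_dvd_right _ _
    have hdA : (↑(Int.gcd v w):ℤ) ∣ A := hA_vw ▸ dvd_add h1 h2
    have hde2 : (↑(Int.gcd v w):ℤ) ∣ e^2 := he_vw ▸ dvd_sub h2 h1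
    have := (hAe.pow_right (n := 2)).isUnit_of_dvd' hdA hde2
    rw [Int.isUnit_iff] at this
    omega
  obtain ⟨r, hrpos, hrv⟩ := int_pow4_of_coprime hgcd hvpos hvw
  obtain ⟨t, htpos, htw⟩ := int_pow4_of_coprime hgcd.symm hwpos (by rw [mul_comm]; exact hvw)
  have heq' : t^4 = r^4 + e^2 := by rw [← htw, ← hrv]; linarith
  have ht4 : t^4 < A := by
    have : t^4 = w := htw.symm
    nlinarith [sq_nonneg e]
  have htA : t < A := lt_of_le_of_lt (le_self_pow₀ (by omega) (by norm_num)) ht4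
  have habs : t.natAbs < A.natAbs := by omega
  exact IH t r |e| habs hrpos (abs_pos.mpr (by omega)) (by rw [sq_abs]; exact heq')


set_option maxHeartbeats 2000000 in
lemma no_fourth_diff_aux : ∀ k : ℕ, ∀ a b c : ℤ, a.natAbs = k → 0 < b → 0 < c →
    a^4 = b^4 + c^2 → False := by
  intro k
  induction k using Nat.strong_induction_on with
  | _ k IH =>
  intro a b c hk hb hc h
  have ha0 : a ≠ 0 := by rintro rfl; nlinarith [pow_pos hb 4, pow_pos hc 2]
  -- gcd reduction
  set g : ℕ := Int.gcd a b with hg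
  have hgpos : 0 < g := Int.gcd_pos_iff.mpr (Or.inl ha0)
  rcases Nat.lt_or_ge 1 g with hg1 | hg1
  · -- non-coprime: divide out
    obtain ⟨a₁, ha₁⟩ : (g:ℤ) ∣ a := Int.gcd_dvd_left _ _
    obtain ⟨b₁, hb₁⟩ : (g:ℤ) ∣ b := Int.gcd_dvd_right _ _
    rw [ha₁, hb₁] at h
    have hc4 : ((g:ℤ)^2)^2 ∣ c^2 := ⟨a₁^4 - b₁^4, by linear_combination -h⟩
    have hgc : (g:ℤ)^2 ∣ c := (Int.pow_dvd_pow_iff (by norm_num)).mp hc4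
    obtain ⟨c₁, hc₁⟩ := hgc
    have hgz : (0:ℤ) < (g:ℤ) := by exact_mod_cast hgpos
    have heq1 : a₁^4 = b₁^4 + c₁^2 := by
      have h4 : (g:ℤ)^4 * a₁^4 = (g:ℤ)^4 * (b₁^4 + c₁^2) := by
        rw [hc₁] at h; linear_combination h
      exact mul_left_cancel₀ (by positivity) h4
    have hb₁pos : 0 < b₁ := by
      by_contra hh; push_neg at hh; nlinarith
    have hc₁pos : 0 < c₁ := by
      have hc1ne : c₁ ≠ 0 := by rintro rfl; rw [hc₁] at hc; norm_num at hc
      rcases hc1ne.lt_or_gt with hneg | hpos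
      · exfalso; rw [hc₁] at hc; nlinarith
      · exact hpos
    have ha₁0 : a₁ ≠ 0 := by rintro rfl; rw [mul_zero] at ha₁; exact ha0 ha₁
    have hmeas : a₁.natAbs < k := by
      have : a.natAbs = g * a₁.natAbs := by
        rw [ha₁, Int.natAbs_mul, Int.natAbs_natCast]
      have h1 : a₁.natAbs ≠ 0 := Int.natAbs_ne_zero.mpr ha₁0
      have h2 := (Nat.lt_mul_iff_one_lt_left (Nat.pos_of_ne_zero h1)).mpr hg1
      omega
    exact IH a₁.natAbs hmeas a₁ b₁ c₁ rfl hb₁pos hc₁pos heq1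
  · -- coprime case
    have hgcd1 : Int.gcd a b = 1 := by omega
    have hab : IsCoprime a b := Int.isCoprime_iff_gcd_eq_one.mpr hgcd1
    have hb0 : b ≠ 0 := hb.ne'
    -- a is odd
    have hbodd_of_aeven : a % 2 = 0 → b % 2 = 1 := by
      intro haev
      rcases Int.emod_two_eq b with hbev | hbodd
      · exfalso
        have h2a : (2:ℤ) ∣ a := Int.dvd_of_emod_eq_zero haev
        have h2b : (2:ℤ) ∣ b := Int.dvd_of_emod_eq_zero hbev
        have := hab.isUnit_of_dvd' h2a h2b
        rw [Int.isUnit_iff] at this; omega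
      · exact hbodd
    have ha2 : a % 2 = 1 := by
      rcases Int.emod_two_eq a with haev | haodd
      · exfalso
        have hbodd := hbodd_of_aeven haev
        obtain ⟨j, rfl⟩ : ∃ j, a = 2*j := ⟨a/2, by omega⟩
        have e1 : c^2 = 16*j^4 - b^4 := by linear_combination -h
        have e2 := sq_mod4 c
        have e3 := odd_pow4_mod8 hbodd
        generalize c^2 = C at e1 e2
        generalize b^4 = B at e1 e3
        generalize j^4 = J at e1
        omega
      · exact haodd
    have ha4 := odd_pow4_mod8 ha2
    -- b and c not both odd
    have hnotboth : ¬ (b % 2 = 1 ∧ c % 2 = 1) := by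
      rintro ⟨hbo, hco⟩
      have e1 := odd_pow4_mod8 hbo
      have e2 := odd_sq_mod8 hco
      generalize a^4 = A at h ha4
      generalize b^4 = B at h e1
      generalize c^2 = C at h e2
      omega
    -- c and b not both even
    have hnotbothev : ¬ (b % 2 = 0 ∧ c % 2 = 0) := by
      rintro ⟨hbe, hce⟩
      obtain ⟨β, rfl⟩ : ∃ β, b = 2*β := ⟨b/2, by omega⟩
      obtain ⟨γ, rfl⟩ : ∃ γ, c = 2*γ := ⟨c/2, by omega⟩
      have e1 : a^4 = 16*β^4 + 4*γ^2 := by linear_combination h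
      generalize a^4 = A at e1 ha4
      generalize β^4 = B at e1
      generalize γ^2 = C at e1
      omega
    have haz : (0:ℤ) < a^2 := by positivity
    rcases Int.emod_two_eq c with hce | hco
    · -- c even, b odd
      have hbo : b % 2 = 1 := by
        rcases Int.emod_two_eq b with h' | h'
        · exact absurd ⟨h', hce⟩ hnotbothev
        · exact h'
      have hT : PythagoreanTriple (b^2) c (a^2) := by
        show b^2 * b^2 + c * c = a^2 * a^2
        linear_combination -h
      have hbc : IsCoprime b c := by
        have h1 : IsCoprime b (a^4) := hab.symm.pow_right
        rw [h] at h1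
        have h2 : IsCoprime b (c^2 + b*b^3) := by
          rw [show c^2 + b*b^3 = b^4 + c^2 by ring]; exact h1
        have h3 : IsCoprime b (c^2) := by
          have := h2.add_mul_left_right (-(b^3))
          rw [show c^2 + b*b^3 + b * -b^3 = c^2 by ring] at this
          exact this
        exact (IsCoprime.pow_right_iff (by norm_num)).mp h3
      have hcb2 : Int.gcd (b^2) c = 1 :=
        Int.isCoprime_iff_gcd_eq_one.mp ((hbc.pow_left).symm.symm)
      have hb2odd : b^2 % 2 = 1 := by have := odd_sq_mod8 hbo; omega
      obtain ⟨m, n, hb2, hceq, ha2', hmn, hpar, hm0⟩ :=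
        PythagoreanTriple.coprime_classification' hT hcb2 hb2odd haz
      have hn0 : n ≠ 0 := by rintro rfl; rw [mul_zero] at hceq; omega
      have hm0' : m ≠ 0 := by
        rintro rfl
        have : b^2 = -n^2 := by linarith [hb2]
        nlinarith [sq_nonneg b, sq_nonneg n]
      have heq2 : m^4 = n^4 + (a*b)^2 := by
        linear_combination (-(m^2+n^2))*hb2 + (-(b^2))*ha2'
      have hmlt : m.natAbs < k := by
        have h1 : m^2 < a^2 := by nlinarith [sq_nonneg n]
        have h2 : m < |a| := by nlinarith [abs_nonneg a, sq_abs a]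
        rw [Int.abs_eq_natAbs] at h2
        omega
      exact IH m.natAbs hmlt m |n| |a*b| rfl (abs_pos.mpr hn0)
        (abs_pos.mpr (mul_ne_zero ha0 hb0))
        (by rw [sq_abs, ← abs_pow, abs_of_nonneg (by positivity : (0:ℤ) ≤ n^4)]; exact heq2)
    · -- c odd, b even
      have hbe : b % 2 = 0 := by
        rcases Int.emod_two_eq b with h' | h'
        · exact h'
        · exact absurd ⟨h', hco⟩ hnotboth
      have hT : PythagoreanTriple c (b^2) (a^2) := by
        show c * c + b^2 * b^2 = a^2 * a^2
        linear_combination -h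
      have hbc : IsCoprime c b := by
        have h1 : IsCoprime (a^4) b := hab.pow_left
        rw [h] at h1
        have h2 : IsCoprime (c^2 + b*b^3) b := by
          rw [show c^2 + b*b^3 = b^4 + c^2 by ring]; exact h1
        have h3 : IsCoprime (c^2) b := by
          have := h2.add_mul_left_left (-(b^3))
          rw [show c^2 + b*b^3 + b * -b^3 = c^2 by ring] at this
          exact this
        exact (IsCoprime.pow_left_iff (by norm_num)).mp h3
      have hcb2 : Int.gcd c (b^2) = 1 := Int.isCoprime_iff_gcd_eq_one.mp (hbc.pow_right)
      obtain ⟨m, n, hceq, hb2, ha2', hmn, hpar, hm0⟩ :=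
        PythagoreanTriple.coprime_classification' hT hcb2 hco haz
      have hmn' : IsCoprime m n := Int.isCoprime_iff_gcd_eq_one.mpr hmn
      have hm0' : 0 < m := by
        rcases hm0.lt_or_eq with h'|h'
        · exact h'
        · exfalso; rw [← h'] at hb2; simp at hb2; nlinarith [sq_nonneg b]
      have hn0 : 0 < n := by nlinarith [sq_nonneg b, pow_pos hb 2]
      obtain ⟨b₁, hb₁⟩ : (2:ℤ) ∣ b := Int.dvd_of_emod_eq_zero hbe
      have hb₁0 : b₁ ≠ 0 := by rintro rfl; rw [mul_zero] at hb₁; exact hb0 hb₁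
      have hmn2 : m * n = 2*b₁^2 := by
        have : (2*b₁)^2 = 2*m*n := by rw [← hb₁]; exact hb2
        linarith [this]
      -- IH adapter for core at |a|
      have hIH' : ∀ a' b' c' : ℤ, a'.natAbs < |a|.natAbs → 0 < b' → 0 < c' →
          a'^4 = b'^4 + c'^2 → False := by
        intro a' b' c' hlt hb' hc' heq'
        refine IH a'.natAbs ?_ a' b' c' rfl hb' hc' heq'
        rw [Int.natAbs_abs] at hlt; omega
      have habs0 : 0 < |a| := abs_pos.mpr ha0
      have habs2 : |a| % 2 = 1 := by rcases abs_cases a with ⟨h',_⟩|⟨h',_⟩ <;> omega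
      have hsqabs : |a|^2 = a^2 := sq_abs a
      rcases hpar with ⟨hme, hno⟩ | ⟨hmo, hne⟩
      · -- m even, n odd
        obtain ⟨u, hu⟩ : (2:ℤ) ∣ m := Int.dvd_of_emod_eq_zero hme
        have hupos : 0 < u := by nlinarith
        have hun : u * n = b₁^2 := by
          rw [hu] at hmn2; linarith
        have hcun : IsCoprime u n := by
          rw [hu] at hmn'; exact hmn'.of_mul_left_right
        obtain ⟨d, hdor⟩ := Int.sq_of_isCoprime hcun hun
        have hud : u = d^2 := by
          rcases hdor with h'|h'
          · exact h'
          · exfalso; nlinarith [sq_nonneg d]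
        obtain ⟨e, heor⟩ := Int.sq_of_isCoprime hcun.symm (by rw [mul_comm]; exact hun)
        have hne' : n = e^2 := by
          rcases heor with h'|h'
          · exact h'
          · exfalso; nlinarith [sq_nonneg e]
        have hd0 : d ≠ 0 := by rintro rfl; rw [hud] at hupos; norm_num at hupos
        have he2 : e % 2 = 1 := by
          rcases Int.emod_two_eq e with h'|h'
          · exfalso
            obtain ⟨f, rfl⟩ : ∃ f, e = 2*f := ⟨e/2, by omega⟩
            have : n = 4*f^2 := by rw [hne']; ring
            generalize f^2 = F at this
            omega
          · exact h'
        have hde : IsCoprime d e := by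
          have h1 : IsCoprime (d^2) (e^2) := by rw [← hud, ← hne']; exact hcun
          exact (IsCoprime.pow_left_iff (by norm_num)).mp
            ((IsCoprime.pow_right_iff (by norm_num)).mp h1)
        have hAeq : |a|^2 = 4*d^4 + e^4 := by
          rw [hsqabs, ha2', hu, hud, hne']; ring
        exact no_fourth_diff_core habs0 habs2 hd0 he2 hde hAeq hIH'
      · -- m odd, n even
        obtain ⟨u, hu⟩ : (2:ℤ) ∣ n := Int.dvd_of_emod_eq_zero hne
        have hupos : 0 < u := by nlinarith
        have hun : m * u = b₁^2 := by
          rw [hu] at hmn2; linarith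
        have hcun : IsCoprime m u := by
          rw [hu] at hmn'; exact hmn'.of_mul_right_right
        obtain ⟨d, hdor⟩ := Int.sq_of_isCoprime hcun hun
        have hud : m = d^2 := by
          rcases hdor with h'|h'
          · exact h'
          · exfalso; nlinarith [sq_nonneg d]
        obtain ⟨e, heor⟩ := Int.sq_of_isCoprime hcun.symm (by rw [mul_comm]; exact hun)
        have hne' : u = e^2 := by
          rcases heor with h'|h'
          · exact h'
          · exfalso; nlinarith [sq_nonneg e]
        have he0 : e ≠ 0 := by rintro rfl; rw [hne'] at hupos; norm_num at hupos
        have hd2 : d % 2 = 1 := by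
          rcases Int.emod_two_eq d with h'|h'
          · exfalso
            obtain ⟨f, rfl⟩ : ∃ f, d = 2*f := ⟨d/2, by omega⟩
            have : m = 4*f^2 := by rw [hud]; ring
            generalize f^2 = F at this
            omega
          · exact h'
        have hde : IsCoprime e d := by
          have h1 : IsCoprime (d^2) (e^2) := by rw [← hud, ← hne']; exact hcun
          exact ((IsCoprime.pow_left_iff (by norm_num)).mp
            ((IsCoprime.pow_right_iff (by norm_num)).mp h1)).symm
        have hAeq : |a|^2 = 4*e^4 + d^4 := by
          rw [hsqabs, ha2', hu, hud, hne']; ring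
        exact no_fourth_diff_core habs0 habs2 he0 hd2 hde hAeq hIH'

theorem int_pow4_diff {a b c : ℤ} (hb : b ≠ 0) (h : a^4 = b^4 + c^2) : c = 0 := by
  by_contra hc
  refine no_fourth_diff_aux a.natAbs a |b| |c| rfl (abs_pos.mpr hb) (abs_pos.mpr hc) ?_
  rw [← abs_pow, abs_of_nonneg (by positivity : (0:ℤ) ≤ b^4), sq_abs]
  exact h


set_option maxHeartbeats 2000000 in
lemma curve_int_points {p q c : ℤ} (hq : 0 < q) (hpq : IsCoprime p q)
    (h : c^2 = p*(p^2+4*q^4)) :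
    (p = 0 ∧ c = 0) ∨ (p = 2*q^2 ∧ (c = 4*q^3 ∨ c = -4*q^3)) := by
  rcases eq_or_ne p 0 with rfl | hp0
  · left
    refine ⟨rfl, ?_⟩
    have : c^2 = 0 := by linarith [h]
    exact pow_eq_zero_iff (by norm_num) |>.mp this
  · have hq4 : (0:ℤ) < q^4 := by positivity
    have hppos : 0 < p := by
      rcases hp0.lt_or_gt with hneg | hpos
      · exfalso; nlinarith [sq_nonneg c, sq_nonneg p]
      · exact hpos
    rcases Int.emod_two_eq p with hpe | hpo
    · -- p even : the solution branch
      obtain ⟨P, rfl⟩ : (2:ℤ) ∣ p := Int.dvd_of_emod_eq_zero hpe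
      have hPpos : 0 < P := by linarith
      have hqodd : q % 2 = 1 := by
        rcases Int.emod_two_eq q with h' | h'
        · exfalso
          have h2p : (2:ℤ) ∣ 2*P := ⟨P, rfl⟩
          have h2q : (2:ℤ) ∣ q := Int.dvd_of_emod_eq_zero h'
          have := hpq.isUnit_of_dvd' h2p h2q
          rw [Int.isUnit_iff] at this; omega
        · exact h'
      have hPq : IsCoprime P q := by
        have := hpq; exact this.of_mul_left_right
      have hc8 : c^2 = 8*(P*(P^2+q^4)) := by linear_combination h
      have hce : c % 2 = 0 := by
        rcases Int.emod_two_eq c with h' | h'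
        · exact h'
        · exfalso
          have := odd_sq_mod8 h'
          generalize c^2 = C at hc8 this
          generalize P*(P^2+q^4) = X at hc8
          omega
      obtain ⟨C, rfl⟩ : (2:ℤ) ∣ c := Int.dvd_of_emod_eq_zero hce
      have hC2 : C^2 = 2*(P*(P^2+q^4)) := by linarith [hc8, sq_nonneg C]
      have hq4odd : q^4 % 2 = 1 := by have := odd_pow4_mod8 hqodd; omega
      have hPsq : IsCoprime P (P^2+q^4) := by
        have h1 : IsCoprime P (q^4) := hPq.pow_right
        have h2 := h1.add_mul_left_right P
        rw [show q^4 + P*P = P^2 + q^4 by ring] at h2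
        exact h2
      rcases Int.emod_two_eq P with hPe | hPo
      · -- P even : impossible
        exfalso
        have hodd : (P^2 + q^4) % 2 = 1 := by
          obtain ⟨Pp, rfl⟩ : (2:ℤ) ∣ P := Int.dvd_of_emod_eq_zero hPe
          have : (2*Pp)^2 + q^4 = 4*Pp^2 + q^4 := by ring
          rw [this]
          generalize Pp^2 = X
          omega
        have hcop2P : IsCoprime (2*P) (P^2+q^4) :=
          IsCoprime.mul_left (isCoprime_two_of_odd hodd) hPsq
        have hprod : (2*P)*(P^2+q^4) = C^2 := by linear_combination -hC2
        obtain ⟨s, hsor⟩ := Int.sq_of_isCoprime hcop2P hprod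
        have hps : 2*P = s^2 := by
          rcases hsor with h'|h'
          · exact h'
          · exfalso; nlinarith [sq_nonneg s]
        obtain ⟨t, htor⟩ := Int.sq_of_isCoprime hcop2P.symm (by rw [mul_comm]; exact hprod)
        have hpt : P^2 + q^4 = t^2 := by
          rcases htor with h'|h'
          · exact h'
          · exfalso; nlinarith [sq_nonneg t, sq_nonneg P]
        set T := |t| with hT
        have hT2 : P^2 + q^4 = T^2 := by rw [hT, sq_abs]; exact hpt
        have hTpos : 0 < T := by nlinarith [sq_nonneg P, abs_nonneg t]
        have hTgtP : P < T := by nlinarith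
        set u := T - P with hu
        set w := T + P with hw
        have hupos : 0 < u := by simp [hu]; linarith
        have hwpos : 0 < w := by simp [hw]; linarith
        have huw : u * w = q^4 := by rw [hu, hw]; linear_combination -hT2
        have hPT : IsCoprime P T := by
          have h1 : IsCoprime P (T^2) := by rw [← hT2]; exact hPsq
          exact (IsCoprime.pow_right_iff (by norm_num)).mp h1
        have hq2 : IsCoprime (q^4) (2:ℤ) := (isCoprime_two_of_odd hq4odd).symm
        have hcop : IsCoprime u w := by
          rw [Int.isCoprime_iff_gcd_eq_one]
          set g : ℤ := ↑(Int.gcd u w) with hgdef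
          have h1 : g ∣ u := Int.gcd_dvd_left _ _
          have h2 : g ∣ w := Int.gcd_dvd_right _ _
          have hgq : g ∣ q^4 := h1.trans ⟨w, huw.symm⟩
          have hg2 : IsCoprime g (2:ℤ) := IsCoprime.of_isCoprime_of_dvd_left hq2 hgq
          have hdT : g ∣ T := by
            refine hg2.dvd_of_dvd_mul_right ?_
            have : T * 2 = u + w := by rw [hu, hw]; ring
            rw [this]; exact dvd_add h1 h2
          have hdP : g ∣ P := by
            refine hg2.dvd_of_dvd_mul_right ?_
            have : P * 2 = w - u := by rw [hu, hw]; ring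
            rw [this]; exact dvd_sub h2 h1
          have := hPT.symm.isUnit_of_dvd' hdT hdP
          rw [Int.isUnit_iff] at this
          omega
        obtain ⟨m, hmpos, hmu⟩ := int_pow4_of_coprime hcop hupos huw
        obtain ⟨n, hnpos, hnw⟩ := int_pow4_of_coprime hcop.symm hwpos (by rw [mul_comm]; exact huw)
        have heqn : n^4 = m^4 + s^2 := by
          have hwu : w - u = 2*P := by rw [hu, hw]; ring
          rw [← hnw, ← hmu]; linarith [hps, hwu]
        have := int_pow4_diff (by omega : m ≠ 0) heqn
        rw [this] at hps; norm_num at hps; omega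
      · -- P odd : the solution
        have hP28 := odd_sq_mod8 hPo
        have hq48 := odd_pow4_mod8 hqodd
        obtain ⟨H, hH⟩ : Even (P^2 + q^4) :=
          (Int.odd_iff.mpr (by have := odd_sq_mod8 hPo; omega)).add_odd
            (Int.odd_iff.mpr (by omega))
        have hHodd : H % 2 = 1 := by
          generalize hX : P^2 = X at hP28 hH
          generalize hY : q^4 = Y at hq48 hH
          omega
        have hC4 : C^2 = 4*(P*H) := by linear_combination hC2 + 2*P*hH
        have hCe : C % 2 = 0 := by
          rcases Int.emod_two_eq C with h' | h'
          · exact h'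
          · exfalso
            have := odd_sq_mod8 h'
            generalize C^2 = X at hC4 this
            generalize P*H = Y at hC4
            omega
        obtain ⟨D, rfl⟩ : (2:ℤ) ∣ C := Int.dvd_of_emod_eq_zero hCe
        have hD2 : P * H = D^2 := by linarith [hC4]
        have hPH : IsCoprime P H := by
          have h1 : IsCoprime P (2*H) := by
            rw [show (2*H : ℤ) = P^2 + q^4 by linarith [hH]]
            exact hPsq
          exact h1.of_mul_right_right
        obtain ⟨s, hsor⟩ := Int.sq_of_isCoprime hPH hD2
        have hPs : P = s^2 := by
          rcases hsor with h'|h'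
          · exact h'
          · exfalso; nlinarith [sq_nonneg s]
        obtain ⟨t, htor⟩ := Int.sq_of_isCoprime hPH.symm (by rw [mul_comm]; exact hD2)
        have hHt : H = t^2 := by
          rcases htor with h'|h'
          · exact h'
          · exfalso
            have : 0 < H := by linarith [hH, sq_nonneg P, hq4]
            nlinarith [sq_nonneg t]
        have hsodd : s % 2 = 1 := by
          rcases Int.emod_two_eq s with h' | h'
          · exfalso
            obtain ⟨σ, rfl⟩ : (2:ℤ) ∣ s := Int.dvd_of_emod_eq_zero h'
            have : P = 4*σ^2 := by rw [hPs]; ring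
            generalize σ^2 = X at this
            omega
          · exact h'
        have hs4 : s^4 + q^4 = 2*t^2 := by
          linear_combination (-(P+s^2))*hPs + hH + 2*hHt
        obtain ⟨G, hG⟩ : Even (s^4 - q^4) :=
          (Int.odd_iff.mpr (by have := odd_pow4_mod8 hsodd; omega)).sub_odd
            (Int.odd_iff.mpr (by omega))
        have ht4 : 4*(t^4) = 4*((s*q)^4 + G^2) := by
          linear_combination (-(s^4+q^4+2*t^2))*hs4 + (s^4-q^4+2*G)*hG
        have ht4' : t^4 = (s*q)^4 + G^2 := by linarith
        have hsq0 : s*q ≠ 0 := mul_ne_zero (by omega) (by omega)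
        have hG0 := int_pow4_diff hsq0 ht4'
        rw [hG0] at hG
        have hs2q2 : s^2 = q^2 := by
          have h4 : s^4 = q^4 := by linarith [hG]
          have hle : s^2 ≤ q^2 := by nlinarith [sq_nonneg s, sq_nonneg q]
          have hge : q^2 ≤ s^2 := by nlinarith [sq_nonneg s, sq_nonneg q]
          linarith
        have hPq2 : P = q^2 := by rw [hPs, hs2q2]
        right
        constructor
        · rw [hPq2]
        · rw [hPq2] at h
          have hzero : (4*D - 4*q^3)*(4*D + 4*q^3) = 0 := by linear_combination h
          rcases mul_eq_zero.mp hzero with h' | h'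
          · left; linarith
          · right; linarith
    · -- p odd : impossible
      exfalso
      have hp4 : IsCoprime p (4*q^4) :=
        IsCoprime.mul_right (by
          have := (isCoprime_two_of_odd hpo).symm
          have h4 : IsCoprime p ((2:ℤ)*2) := IsCoprime.mul_right this this
          norm_num at h4; exact h4) (hpq.pow_right)
      have hpP : IsCoprime p (p^2+4*q^4) := by
        have := hp4.add_mul_left_right p
        rw [show 4*q^4 + p*p = p^2 + 4*q^4 by ring] at this
        exact this
      obtain ⟨s, hsor⟩ := Int.sq_of_isCoprime hpP h.symm
      have hps : p = s^2 := by
        rcases hsor with h'|h'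
        · exact h'
        · exfalso; nlinarith [sq_nonneg s]
      have hs0 : s ≠ 0 := by rintro rfl; norm_num at hps; omega
      obtain ⟨t, htor⟩ := Int.sq_of_isCoprime hpP.symm (by rw [mul_comm]; exact h.symm)
      have hpt : p^2 + 4*q^4 = t^2 := by
        rcases htor with h'|h'
        · exact h'
        · exfalso; nlinarith [sq_nonneg t, sq_nonneg p]
      set T := |t| with hT
      have hT2 : p^2 + 4*q^4 = T^2 := by rw [hT, sq_abs]; exact hpt
      have hTpos : 0 < T := by
        rcases eq_or_ne t 0 with rfl | ht0
        · exfalso; simp at hpt; nlinarith [sq_nonneg p]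
        · exact abs_pos.mpr ht0
      have hTodd : T % 2 = 1 := by
        rcases Int.emod_two_eq T with h' | h'
        · exfalso
          obtain ⟨τ, hτ⟩ : (2:ℤ) ∣ T := Int.dvd_of_emod_eq_zero h'
          have hps8 := odd_sq_mod8 hpo
          have : p^2 = 4*τ^2 - 4*q^4 := by rw [hτ] at hT2; linear_combination hT2
          generalize p^2 = X at hps8 this
          generalize τ^2 = Y at this
          generalize q^4 = Z at this
          omega
        · exact h'
      have hTgtp : p < T := by nlinarith
      have hpodd : Odd p := Int.odd_iff.mpr hpo
      have hToddO : Odd T := Int.odd_iff.mpr hTodd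
      obtain ⟨u, hu⟩ : Even (T - p) := hToddO.sub_odd hpodd
      obtain ⟨w, hw⟩ : Even (T + p) := hToddO.add_odd hpodd
      have hupos : 0 < u := by linarith
      have hwpos : 0 < w := by linarith
      have huw : u * w = q^4 := by nlinarith [hu, hw, hT2]
      have hpT : IsCoprime p T := by
        have h1 : IsCoprime p (T^2) := by rw [← hT2]; exact hpP
        exact (IsCoprime.pow_right_iff (by norm_num)).mp h1
      have hcop : IsCoprime u w := by
        rw [Int.isCoprime_iff_gcd_eq_one]
        have h1 : (↑(Int.gcd u w):ℤ) ∣ u := Int.gcd_dvd_left _ _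
        have h2 : (↑(Int.gcd u w):ℤ) ∣ w := Int.gcd_dvd_right _ _
        have hdT : (↑(Int.gcd u w):ℤ) ∣ T := by
          have : T = u + w := by linarith
          rw [this]; exact dvd_add h1 h2
        have hdp : (↑(Int.gcd u w):ℤ) ∣ p := by
          have : p = w - u := by linarith
          rw [this]; exact dvd_sub h2 h1
        have := hpT.symm.isUnit_of_dvd' hdT hdp
        rw [Int.isUnit_iff] at this; omega
      obtain ⟨m, hmpos, hmu⟩ := int_pow4_of_coprime hcop hupos huw
      obtain ⟨n, hnpos, hnw⟩ := int_pow4_of_coprime hcop.symm hwpos (by rw [mul_comm]; exact huw)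
      have heqn : n^4 = m^4 + s^2 := by rw [← hnw, ← hmu]; linarith [hps]
      have := int_pow4_diff (by omega : m ≠ 0) heqn
      rw [this] at hps; norm_num at hps; omega


lemma rat_curve_points {x y : ℚ} (h : y^2 = x^3 + 4*x) :
    (x = 0 ∧ y = 0) ∨ (x = 2 ∧ (y = 4 ∨ y = -4)) := by
  have hbden : (0:ℤ) < (x.den:ℤ) := by exact_mod_cast x.pos
  have hdden : (0:ℤ) < (y.den:ℤ) := by exact_mod_cast y.pos
  have hxq : (x.num : ℚ) = x * (x.den : ℚ) := by
    have := Rat.num_div_den x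
    field_simp at this ⊢; linarith
  have hyq : (y.num : ℚ) = y * (y.den : ℚ) := by
    have := Rat.num_div_den y
    field_simp at this ⊢; linarith
  have keyQ : (y.num:ℚ)^2 * (x.den:ℚ)^3
      = (x.num*(x.num^2+4*(x.den:ℚ)^2))*(y.den:ℚ)^2 := by
    rw [hxq, hyq]
    linear_combination ((y.den:ℚ)^2 * (x.den:ℚ)^3) * h
  have key : (y.num:ℤ)^2 * (x.den:ℤ)^3
      = (x.num*(x.num^2+4*(x.den:ℤ)^2))*(y.den:ℤ)^2 := by exact_mod_cast keyQ
  -- coprimality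
  have hxco : IsCoprime (x.num) ((x.den:ℤ)) := by
    rw [Int.isCoprime_iff_gcd_eq_one, Int.gcd]
    simpa using x.reduced
  have hyco : IsCoprime (y.num) ((y.den:ℤ)) := by
    rw [Int.isCoprime_iff_gcd_eq_one, Int.gcd]
    simpa using y.reduced
  -- b^3 = d^2
  have hco1 : IsCoprime ((x.den:ℤ)^3) (x.num*(x.num^2+4*(x.den:ℤ)^2)) := by
    have h1 : IsCoprime ((x.den:ℤ)) (x.num) := hxco.symm
    have h2 : IsCoprime ((x.den:ℤ)) (x.num^2+4*(x.den:ℤ)^2) := by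
      have := (h1.pow_right (n := 2)).add_mul_left_right (4*(x.den:ℤ))
      rw [show x.num^2 + (x.den:ℤ)*(4*(x.den:ℤ)) = x.num^2+4*(x.den:ℤ)^2 by ring] at this
      exact this
    exact (h1.mul_right h2).pow_left
  have hbd : ((x.den:ℤ))^3 ∣ ((y.den:ℤ))^2 := by
    refine hco1.dvd_of_dvd_mul_left ?_
    exact ⟨(y.num)^2, by linear_combination -key⟩
  have hdb : ((y.den:ℤ))^2 ∣ ((x.den:ℤ))^3 := by
    have hco2 : IsCoprime ((y.den:ℤ)^2) ((y.num)^2) := (hyco.symm).pow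
    refine hco2.dvd_of_dvd_mul_right ?_
    exact ⟨x.num*(x.num^2+4*(x.den:ℤ)^2), by linear_combination key⟩
  have heqbd : ((y.den:ℤ))^2 = ((x.den:ℤ))^3 :=
    Int.dvd_antisymm (by positivity) (by positivity) hdb hbd
  have heqN : y.den^2 = x.den^3 := by exact_mod_cast heqbd
  -- x.den = k^2, y.den = k^3
  have hdvdN : x.den ∣ y.den := by
    have h1 : x.den^2 ∣ y.den^2 := by
      rw [heqN]; exact pow_dvd_pow _ (by norm_num)
    exact (Nat.pow_dvd_pow_iff (by norm_num)).mp h1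
  obtain ⟨k, hk⟩ := hdvdN
  have hxden : x.den = k^2 := by
    have h1 : x.den^2 * x.den = x.den^2 * k^2 := by
      rw [show x.den^2 * x.den = x.den^3 by ring, ← heqN, hk]; ring
    exact Nat.eq_of_mul_eq_mul_left (by positivity) h1
  have hyden : y.den = k^3 := by rw [hk, hxden]; ring
  have hk0 : 0 < k := by
    rcases Nat.eq_zero_or_pos k with rfl | h'
    · exfalso; rw [hxden] at hbden; norm_num at hbden
    · exact h'
  have hK0 : (0:ℤ) < (k:ℤ) := by exact_mod_cast hk0
  -- integer equation
  have hbK : ((x.den:ℤ)) = (k:ℤ)^2 := by exact_mod_cast congrArg (Nat.cast : ℕ → ℤ) hxden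
  have hdK : ((y.den:ℤ)) = (k:ℤ)^3 := by exact_mod_cast congrArg (Nat.cast : ℕ → ℤ) hyden
  have keyK : (y.num)^2 * ((k:ℤ)^2)^3 = (x.num*(x.num^2+4*(k:ℤ)^4))*((k:ℤ)^3)^2 := by
    rw [← hbK, ← hdK]
    rw [show x.num^2+4*(k:ℤ)^4 = x.num^2 + 4*((k:ℤ)^2)^2 by ring, ← hbK]
    exact key
  have hinteq : (y.num)^2 = x.num*(x.num^2+4*(k:ℤ)^4) := by
    have h6 : ((k:ℤ)^6) ≠ 0 := by positivity
    refine mul_right_cancel₀ h6 ?_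
    rw [show (y.num)^2 * (k:ℤ)^6 = (y.num)^2 * ((k:ℤ)^2)^3 by ring, keyK]; ring
  have hcopK : IsCoprime (x.num) ((k:ℤ)) := by
    rw [Int.isCoprime_iff_gcd_eq_one, Int.gcd]
    have : Nat.Coprime x.num.natAbs (k^2) := by rw [← hxden]; simpa using x.reduced
    simpa using Nat.Coprime.coprime_dvd_right (dvd_pow_self k (by norm_num)) this
  rcases curve_int_points hK0 hcopK hinteq with ⟨hx0, hy0⟩ | ⟨hx2, hyc⟩
  · left
    exact ⟨Rat.num_eq_zero.mp hx0, Rat.num_eq_zero.mp hy0⟩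
  · right
    -- k = 1
    have hk1 : k = 1 := by
      have hdvd : (k:ℤ)^2 ∣ x.num := ⟨2, by linarith [hx2]⟩
      have hdvdN2 : k^2 ∣ x.num.natAbs := by
        have := Int.natAbs_dvd_natAbs.mpr hdvd
        simpa [Int.natAbs_pow] using this
      have hco : Nat.Coprime x.num.natAbs (k^2) := by rw [← hxden]; simpa using x.reduced
      have : k^2 ∣ 1 := by
        calc k^2 ∣ Nat.gcd x.num.natAbs (k^2) := Nat.dvd_gcd hdvdN2 dvd_rfl
          _ = 1 := hco
      have hk2 : k^2 = 1 := Nat.dvd_one.mp this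
      nlinarith [hk0]
    subst hk1
    have hxden1 : x.den = 1 := by simpa using hxden
    have hyden1 : y.den = 1 := by simpa using hyden
    have hxnum : x.num = 2 := by simpa using hx2
    have hx : x = 2 := by
      rw [← Rat.num_div_den x, hxnum, hxden1]; norm_num
    refine ⟨hx, ?_⟩
    rcases hyc with h' | h'
    · left
      rw [← Rat.num_div_den y, show y.num = 4 by simpa using h', hyden1]; norm_num
    · right
      rw [← Rat.num_div_den y, show y.num = -4 by simpa using h', hyden1]; norm_num



open WeierstrassCurve WeierstrassCurve.Affine

/-- The elliptic curve `E' : y² = x³ + 4x` over `ℚ`. -/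
def E' : WeierstrassCurve.Affine ℚ := ⟨0, 0, 0, 4, 0⟩

lemma nonsingular_two_four : E'.Nonsingular 2 4 := by
  rw [nonsingular_iff, equation_iff]; norm_num [E']

/-- The rational point `(2, 4)` on `E'`. -/
def P24 : E'.Point := .some _ _ nonsingular_two_four

lemma E'_a₁ : E'.a₁ = 0 := rfl
lemma E'_a₂ : E'.a₂ = 0 := rfl
lemma E'_a₃ : E'.a₃ = 0 := rfl
lemma E'_a₄ : E'.a₄ = 4 := rfl
lemma E'_a₆ : E'.a₆ = 0 := rfl

lemma nonsingular_zero_zero : E'.Nonsingular 0 0 := by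
  rw [nonsingular_iff, equation_iff]; norm_num [E']

lemma nonsingular_two_negfour : E'.Nonsingular 2 (-4) := by
  rw [nonsingular_iff, equation_iff]; norm_num [E']

lemma some_congr {W : WeierstrassCurve.Affine ℚ} {x1 y1 x2 y2 : ℚ}
    (h : W.Nonsingular x1 y1) (h2 : W.Nonsingular x2 y2) (hx : x1 = x2) (hy : y1 = y2) :
    Point.some _ _ h = Point.some _ _ h2 := by subst hx; subst hy; rfl

lemma negY_E' (x y : ℚ) : E'.negY x y = -y := by
  rw [negY, E'_a₁, E'_a₃]; ring

lemma double_P24 : P24 + P24 = Point.some _ _ nonsingular_zero_zero := by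
  have hy : (4:ℚ) ≠ E'.negY 2 4 := by rw [negY_E']; norm_num
  rw [P24, Point.add_self_of_Y_ne hy]
  have hs : E'.slope 2 2 4 4 = 2 := by
    rw [slope_of_Y_ne rfl hy, negY_E', E'_a₁, E'_a₂, E'_a₄]; norm_num
  refine some_congr _ _ ?_ ?_
  · rw [addX, hs, E'_a₁, E'_a₂]; norm_num
  · rw [addY, negAddY, negY_E', addX, hs, E'_a₁, E'_a₂]; norm_num

lemma neg_P24 : -P24 = Point.some _ _ nonsingular_two_negfour := by
  rw [P24, Point.neg_some]
  exact some_congr _ _ rfl (negY_E' 2 4)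

lemma quadruple_P24 : Point.some _ _ nonsingular_zero_zero + Point.some _ _ nonsingular_zero_zero
    = (0 : E'.Point) := by
  apply Point.add_of_Y_eq rfl
  rw [negY_E']; norm_num

lemma triple_P24 : P24 + Point.some _ _ nonsingular_zero_zero
    = Point.some _ _ nonsingular_two_negfour := by
  have hx : (2:ℚ) ≠ 0 := by norm_num
  rw [P24, Point.add_of_X_ne hx]
  have hs : E'.slope 2 0 4 0 = 2 := by
    rw [slope_of_X_ne hx]; norm_num
  refine some_congr _ _ ?_ ?_
  · rw [addX, hs, E'_a₁, E'_a₂]; norm_num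
  · rw [addY, negAddY, negY_E', addX, hs, E'_a₁, E'_a₂]; norm_num

/-- the Mordell–Weil group `E'(ℚ)` of `y² = x³ + 4x` has rank `0` and torsion
cyclic of order `4` generated by `(2, 4)`; equivalently, `E'(ℚ)` is cyclic of order `4`
generated by `(2, 4)`. -/
theorem mordell_weil_of_x_cubed_plus_four_x :
    addOrderOf P24 = 4 ∧ ∀ P : E'.Point, ∃ n : ℤ, P = n • P24 := by
  constructor
  · have : Fact (Nat.Prime 2) := ⟨Nat.prime_two⟩
    have h2 : (2:ℕ) • P24 = Point.some _ _ nonsingular_zero_zero := by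
      rw [two_nsmul, double_P24]
    have h4 : (2^2 : ℕ) • P24 = 0 := by
      rw [show (2^2 : ℕ) = 2 + 2 by norm_num, add_nsmul, h2, quadruple_P24]
    have := addOrderOf_eq_prime_pow (x := P24) (p := 2) (n := 1)
      (by rw [pow_one, h2]; exact Point.some_ne_zero _) h4
    simpa using this
  · intro P
    rcases P with _ | @⟨x, y, h⟩
    · exact ⟨0, by rw [zero_zsmul]; exact Point.zero_def⟩
    · have heq : y^2 = x^3 + 4*x := by
        have := (E'.equation_iff x y).mp h.1
        rw [E'_a₁, E'_a₂, E'_a₃, E'_a₄, E'_a₆] at this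
        linarith [this]
      rcases rat_curve_points heq with ⟨hx, hy⟩ | ⟨hx, hy | hy⟩
      · subst hx; subst hy
        refine ⟨2, ?_⟩
        rw [two_zsmul, double_P24]
      · subst hx; subst hy
        exact ⟨1, by rw [one_zsmul]; rfl⟩
      · subst hx; subst hy
        refine ⟨-1, ?_⟩
        rw [neg_zsmul, one_zsmul, neg_P24]
end
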